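/- arXiv:2112.14937 — 3 statements merged into one kernel-verified Lean document; each statement's English description precedes it below -/
import Mathlib

section
/- Let K be a field of characteristic 0 and f ∈ K[z] a polynomial of degree d ≥ 2 whose leading coefficient ℓ has a (d−1)-th root in K. Then there exists a formal Laurent series φ(z) = a₁z + a₀ + a₋₁/z + ⋯ ∈ z·K[[1/z]] with a₁ ≠ 0 satisfying φ(f(z)) = φ(z)^d. -/
open Polynomial

noncomputable section

/-- The element `z = X⁻¹` of the field of formal Laurent series `K((X))`,
where the variable `X` is interpreted as `1/z`; thus `K((X)) = K((1/z))`. -/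
def Zvar (K : Type*) [Field K] : LaurentSeries K := HahnSeries.single (-1) 1

/-- Composition `φ(u)`: the Laurent series `φ ∈ K((1/z))` is viewed as the function
`z ↦ ∑ₙ φ.coeff n · z^{-n}` (so that `φ = lcomp φ (Zvar K)`), and is evaluated at `u`.
The sum converges in the `X`-adic topology whenever `u` is a polynomial in `z` of
positive degree. -/
def lcomp {K : Type*} [Field K] (φ u : LaurentSeries K) : LaurentSeries K :=
  ∑' n : ℤ, φ.coeff n • u ^ (-n)

/-- `φ` is a Böttcher coordinate of the degree-`d` polynomial `f`: a formal Laurent series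
`φ(z) = a₁ z + a₀ + a₋₁/z + ⋯ ∈ z·K[[1/z]]` with `a₁ ≠ 0` such that `φ(f(z)) = φ(z)^d`. -/
def IsBottcher {K : Type*} [Field K] (f : Polynomial K) (d : ℕ) (φ : LaurentSeries K) : Prop :=
  (∀ n : ℤ, n < -1 → φ.coeff n = 0) ∧ φ.coeff (-1) ≠ 0 ∧
    lcomp φ (aeval (Zvar K) f) = φ ^ d
namespace BotAux

open HahnSeries

variable {K : Type*} [Field K]

/-- `x` has no coefficients below `N`. -/
def lbd (N : ℤ) (x : LaurentSeries K) : Prop := ∀ k < N, x.coeff k = 0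

lemma lbd_mul {A B : ℤ} {x y : LaurentSeries K} (hx : lbd A x) (hy : lbd B y) :
    lbd (A + B) (x * y) := by
  intro k hk
  rw [HahnSeries.coeff_mul]
  refine Finset.sum_eq_zero ?_
  rintro ⟨i, j⟩ hij
  rw [Finset.mem_addAntidiagonal] at hij
  obtain ⟨hi, hj, hsum⟩ := hij
  by_contra h
  have hiA : A ≤ i := by
    by_contra h'
    exact hi (hx i (not_le.mp h'))
  have hjB : B ≤ j := by
    by_contra h'
    exact hj (hy j (not_le.mp h'))
  omega

lemma coeff_mul_bot {A B : ℤ} {x y : LaurentSeries K} (hx : lbd A x) (hy : lbd B y) :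
    (x * y).coeff (A + B) = x.coeff A * y.coeff B := by
  rw [HahnSeries.coeff_mul]
  refine Finset.sum_eq_single (A, B) ?_ ?_
  · rintro ⟨i, j⟩ hij hne
    rw [Finset.mem_addAntidiagonal] at hij
    obtain ⟨hi, hj, hsum⟩ := hij
    have hiA : A ≤ i := by
      by_contra h'
      exact hi (hx i (not_le.mp h'))
    have hjB : B ≤ j := by
      by_contra h'
      exact hj (hy j (not_le.mp h'))
    exact absurd (Prod.ext (by omega) (by omega)) hne
  · intro h
    rw [Finset.mem_addAntidiagonal] at h
    push_neg at h
    by_cases hA : x.coeff A = 0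
    · rw [hA, zero_mul]
    by_cases hB : y.coeff B = 0
    · rw [hB, mul_zero]
    exact absurd rfl (h hA hB)

lemma lbd_pow {A : ℤ} {x : LaurentSeries K} (hx : lbd A x) (n : ℕ) :
    lbd ((n : ℤ) * A) (x ^ n) := by
  induction n with
  | zero =>
      intro k hk
      simp only [pow_zero]
      rw [HahnSeries.coeff_one, if_neg]
      omega
  | succ n ih =>
      have h2 : ((n + 1 : ℕ) : ℤ) * A = (n : ℤ) * A + A := by push_cast; ring
      rw [pow_succ, h2]
      exact lbd_mul ih hx

lemma coeff_pow_bot {A : ℤ} {x : LaurentSeries K} (hx : lbd A x) (n : ℕ) :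
    (x ^ n).coeff ((n : ℤ) * A) = (x.coeff A) ^ n := by
  induction n with
  | zero => simp [HahnSeries.coeff_one]
  | succ n ih =>
      have h2 : ((n + 1 : ℕ) : ℤ) * A = (n : ℤ) * A + A := by push_cast; ring
      rw [pow_succ, pow_succ, h2, coeff_mul_bot (lbd_pow hx n) hx, ih]

/-- coefficient extraction as an `AddMonoidHom`. -/
def coeffHom (k : ℤ) : LaurentSeries K →+ K where
  toFun x := x.coeff k
  map_zero' := rfl
  map_add' _ _ := HahnSeries.coeff_add

lemma coeff_sum {α : Type*} (s : Finset α) (f : α → LaurentSeries K) (k : ℤ) :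
    (∑ i ∈ s, f i).coeff k = ∑ i ∈ s, (f i).coeff k :=
  map_sum (coeffHom k) f s

lemma coeff_nsmul (c : ℕ) (x : LaurentSeries K) (k : ℤ) :
    (c • x).coeff k = c • x.coeff k :=
  map_nsmul (coeffHom k) c x

lemma coeff_add_pow {A B : ℤ} {x y : LaurentSeries K} (e : ℕ)
    (hx : lbd A x) (hy : lbd B y) (hAB : A < B) :
    ((x + y) ^ (e + 2)).coeff (((e : ℤ) + 1) * A + B)
      = (x ^ (e + 2)).coeff (((e : ℤ) + 1) * A + B)
        + ((e : K) + 2) * (x.coeff A) ^ (e + 1) * y.coeff B := by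
  set m : ℤ := ((e : ℤ) + 1) * A + B with hm
  rw [add_pow, coeff_sum, Finset.sum_range_succ, Finset.sum_range_succ]
  have h0 : ∀ k ∈ Finset.range (e + 1),
      (x ^ k * y ^ (e + 2 - k) * ((e + 2).choose k : LaurentSeries K)).coeff m = 0 := by
    intro k hk
    rw [Finset.mem_range] at hk
    rw [mul_comm (x ^ k * y ^ (e + 2 - k)) _, ← nsmul_eq_mul, coeff_nsmul]
    have hlbd := lbd_mul (lbd_pow hx k) (lbd_pow hy (e + 2 - k))
    have hcast : ((e + 2 - k : ℕ) : ℤ) = (e : ℤ) + 2 - k := by omega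
    have hpos : (0:ℤ) < ((e : ℤ) + 1 - k) * (B - A) :=
      mul_pos (by omega) (by omega)
    have hlt : m < (k : ℤ) * A + ((e + 2 - k : ℕ) : ℤ) * B := by
      rw [hcast, hm]; nlinarith [hpos]
    rw [hlbd m hlt, smul_zero]
  rw [Finset.sum_eq_zero h0, zero_add]
  have htop : x ^ (e + 2) * y ^ (e + 2 - (e + 2)) * ((e + 2).choose (e + 2) : LaurentSeries K)
      = x ^ (e + 2) := by
    simp
  have hmidc : (e + 2 - (e + 1)) = 1 := by omega
  have hch : ((e + 2).choose (e + 1)) = e + 2 := by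
    simp [Nat.choose_succ_self_right]
  have hmid : (x ^ (e + 1) * y ^ (e + 2 - (e + 1))
        * ((e + 2).choose (e + 1) : LaurentSeries K)).coeff m
      = ((e : K) + 2) * (x.coeff A) ^ (e + 1) * y.coeff B := by
    rw [hmidc, hch, pow_one, mul_comm (x ^ (e + 1) * y) _, ← nsmul_eq_mul, coeff_nsmul]
    have h2 : m = ((e + 1 : ℕ) : ℤ) * A + B := by rw [hm]; push_cast; ring
    rw [h2, coeff_mul_bot (lbd_pow hx (e + 1)) hy, coeff_pow_bot hx (e + 1)]
    push_cast
    ring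
  rw [hmid, htop]
  ring

section Construction

variable (u : LaurentSeries K) (d : ℕ) (t : K)

/-- The linear-in-`v` part of the functional equation at level `j`. -/
def Lsum (j : ℕ) (v : LaurentSeries K) : K :=
  ∑ n ∈ Finset.Icc (-1 : ℤ) (j : ℤ), v.coeff n * (u ^ (-n)).coeff ((j : ℤ) - d + 1)

/-- The next coefficient in the recursive construction. -/
def newc (j : ℕ) (v : LaurentSeries K) : K :=
  (Lsum u d j v - (v ^ d).coeff ((j : ℤ) - d + 1)) / (d * u.coeff (-(d : ℤ)))

/-- Truncations of the Böttcher coordinate. -/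
def trunc : ℕ → LaurentSeries K
  | 0 => HahnSeries.single (-1) t
  | j + 1 => trunc j + HahnSeries.single (j : ℤ) (newc u d j (trunc j))

/-- The Böttcher coordinate. -/
def bphi : LaurentSeries K :=
  (HahnSeries.single (-1 : ℤ) (1 : K)) *
    HahnSeries.ofPowerSeries ℤ K
      (PowerSeries.mk fun i => (trunc u d t (i + 1)).coeff ((i : ℤ) - 1))

lemma bphi_coeff (n : ℤ) :
    (bphi u d t).coeff n = if n + 1 < 0 then 0
      else (trunc u d t ((n + 1).natAbs + 1)).coeff (((n + 1).natAbs : ℤ) - 1) := by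
  have h : n = (n + 1) + -1 := by ring
  rw [bphi, h, HahnSeries.coeff_single_mul_add, one_mul]
  rw [PowerSeries.coeff_coe]
  have h2 : n + 1 + -1 + 1 = n + 1 := by ring
  rw [h2]
  split
  · rfl
  · rw [PowerSeries.coeff_mk]

lemma bphi_coeff_neg {n : ℤ} (hn : n < -1) : (bphi u d t).coeff n = 0 := by
  rw [bphi_coeff, if_pos (by omega)]

lemma bphi_coeff_ge {n : ℤ} (hn : -1 ≤ n) :
    (bphi u d t).coeff n = (trunc u d t ((n + 1).natAbs + 1)).coeff n := by
  rw [bphi_coeff, if_neg (by omega)]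
  congr 1
  omega

lemma trunc_coeff_lo (j : ℕ) : ∀ k : ℤ, k < -1 → (trunc u d t j).coeff k = 0 := by
  induction j with
  | zero =>
      intro k hk
      rw [trunc, HahnSeries.coeff_single_of_ne (by omega)]
  | succ j ih =>
      intro k hk
      rw [trunc, HahnSeries.coeff_add, ih k hk,
        HahnSeries.coeff_single_of_ne (by omega), add_zero]

lemma trunc_coeff_hi (j : ℕ) : ∀ k : ℤ, (j : ℤ) - 1 < k → (trunc u d t j).coeff k = 0 := by
  induction j with
  | zero =>
      intro k hk
      rw [trunc, HahnSeries.coeff_single_of_ne (by omega)]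
  | succ j ih =>
      intro k hk
      push_cast at hk
      rw [trunc, HahnSeries.coeff_add, ih k (by omega),
        HahnSeries.coeff_single_of_ne (by omega), add_zero]

lemma trunc_coeff_stable {i j : ℕ} (hij : i ≤ j) :
    ∀ k : ℤ, k < (i : ℤ) → (trunc u d t j).coeff k = (trunc u d t i).coeff k := by
  induction j, hij using Nat.le_induction with
  | base => intro k _; rfl
  | succ j hij ih =>
      intro k hk
      rw [trunc, HahnSeries.coeff_add, ih k hk,
        HahnSeries.coeff_single_of_ne (by omega), add_zero]

lemma bphi_coeff_eq_trunc (j : ℕ) {k : ℤ} (hk : k < (j : ℤ)) :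
    (bphi u d t).coeff k = (trunc u d t j).coeff k := by
  rcases lt_or_ge k (-1) with h | h
  · rw [bphi_coeff_neg u d t h, trunc_coeff_lo u d t j k h]
  · rw [bphi_coeff_ge u d t h]
    set i := (k + 1).natAbs + 1 with hi
    have hki : k < (i : ℤ) := by
      have : ((k + 1).natAbs : ℤ) = k + 1 := by omega
      omega
    rcases le_total i j with hij | hij
    · rw [trunc_coeff_stable u d t hij k hki]
    · rw [trunc_coeff_stable u d t hij k hk]

lemma bphi_coeff_neg_one : (bphi u d t).coeff (-1) = t := by
  have h0 : ((-1 : ℤ)) < ((1 : ℕ) : ℤ) := by norm_num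
  rw [bphi_coeff_eq_trunc u d t 1 h0]
  simp [trunc, HahnSeries.coeff_single]

lemma bphi_lbd : lbd (-1) (bphi u d t) := fun _ hk => bphi_coeff_neg u d t hk

lemma trunc_lbd (j : ℕ) : lbd (-1) (trunc u d t j) := fun k hk => trunc_coeff_lo u d t j k hk

lemma trunc_coeff_neg_one (j : ℕ) : (trunc u d t j).coeff (-1) = t := by
  rw [trunc_coeff_stable u d t (Nat.zero_le j) (-1) (by norm_num), trunc,
    HahnSeries.coeff_single_same]

end Construction

section Key

variable {u : LaurentSeries K} {d : ℕ} {t : K}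

lemma u_zpow_lbd (hu : lbd (-(d : ℤ)) u) (hu0 : u.coeff (-(d : ℤ)) ≠ 0)
    {n : ℤ} (hn : 0 ≤ n) : lbd ((d : ℤ) * n) (u ^ (-n)) := by
  have hu_ne : u ≠ 0 := fun h => hu0 (by simp [h])
  have hord : u.order = -(d : ℤ) := by
    refine le_antisymm (HahnSeries.order_le_of_coeff_ne_zero hu0) ?_
    by_contra h
    push_neg at h
    exact hu_ne (HahnSeries.coeff_order_eq_zero.mp (hu _ h))
  have hinv_ne : u⁻¹ ≠ 0 := inv_ne_zero hu_ne
  have hoinv : (u⁻¹).order = (d : ℤ) := by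
    have h1 := HahnSeries.order_mul hu_ne hinv_ne
    rw [mul_inv_cancel₀ hu_ne, HahnSeries.order_one] at h1
    omega
  have hlow : lbd (d : ℤ) (u⁻¹) := fun k hk =>
    HahnSeries.coeff_eq_zero_of_lt_order (by rw [hoinv]; exact hk)
  obtain ⟨nn, rfl⟩ := Int.eq_ofNat_of_zero_le hn
  rw [zpow_neg, zpow_natCast, ← inv_pow]
  have := lbd_pow hlow nn
  rwa [mul_comm]

lemma key (hd2 : 2 ≤ d) (hu : lbd (-(d : ℤ)) u) (hu0 : u.coeff (-(d : ℤ)) ≠ 0)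
    (ht : t ^ (d - 1) = u.coeff (-(d : ℤ))) (hdK : (d : K) ≠ 0) (j : ℕ) :
    (∑ n ∈ Finset.Icc (-1 : ℤ) (j : ℤ),
        (bphi u d t).coeff n * (u ^ (-n)).coeff ((j : ℤ) - d + 1))
      = ((bphi u d t) ^ d).coeff ((j : ℤ) - d + 1) := by
  obtain ⟨e, rfl⟩ : ∃ e, d = e + 2 := ⟨d - 2, by omega⟩
  set m : ℤ := (j : ℤ) - (e + 2 : ℕ) + 1 with hm
  set φ := bphi u (e + 2) t with hφ
  set v := trunc u (e + 2) t j with hv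
  set c := newc u (e + 2) j v with hc
  -- LHS equals Lsum of the truncation
  have hujm : (u ^ (-(j : ℤ))).coeff m = 0 := by
    refine u_zpow_lbd hu hu0 (by positivity) m ?_
    have : (0 : ℤ) < ((e : ℤ) + 1) * ((j : ℤ) + 1) := by positivity
    push_cast [hm]
    push_cast at this
    nlinarith [this]
  have hLHS : (∑ n ∈ Finset.Icc (-1 : ℤ) (j : ℤ),
        φ.coeff n * (u ^ (-n)).coeff ((j : ℤ) - (e + 2 : ℕ) + 1))
      = Lsum u (e + 2) j v := by
    rw [Lsum]
    refine Finset.sum_congr rfl ?_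
    intro n hn
    rw [Finset.mem_Icc] at hn
    rcases eq_or_lt_of_le hn.2 with heq | hlt
    · subst heq
      rw [hujm]
      simp
    · rw [bphi_coeff_eq_trunc u (e + 2) t j hlt]
  -- structural facts
  have hvlbd : lbd (-1) v := trunc_lbd u (e + 2) t j
  have hvm1 : v.coeff (-1) = t := trunc_coeff_neg_one u (e + 2) t j
  have hψ : lbd ((j : ℤ)) (φ - v) := by
    intro k hk
    rw [HahnSeries.coeff_sub, bphi_coeff_eq_trunc u (e + 2) t j hk, sub_self]
  have hφj : φ.coeff (j : ℤ) = v.coeff (j : ℤ) + c := by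
    have h1 : ((j : ℤ)) < ((j + 2 : ℕ) : ℤ) := by push_cast; omega
    rw [bphi_coeff_eq_trunc u (e + 2) t (j + 2) h1,
      trunc_coeff_stable u (e + 2) t (show j + 1 ≤ j + 2 by omega) (j : ℤ) (by push_cast; omega)]
    rw [trunc, HahnSeries.coeff_add, HahnSeries.coeff_single_same]
  have hψj : (φ - v).coeff (j : ℤ) = c := by
    rw [HahnSeries.coeff_sub, hφj]; ring
  -- binomial decomposition
  have hdec : (φ ^ (e + 2)).coeff m = (v ^ (e + 2)).coeff m + ((e : K) + 2) * t ^ (e + 1) * c := by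
    have hAB : (-1 : ℤ) < (j : ℤ) := by omega
    have h := coeff_add_pow e hvlbd hψ hAB
    rw [add_sub_cancel] at h
    have hidx : ((e : ℤ) + 1) * (-1) + (j : ℤ) = m := by rw [hm]; push_cast; ring
    rw [hidx] at h
    rw [h, hvm1, hψj]
  -- unfold the definition of c
  have hd1 : (e + 2) - 1 = e + 1 := rfl
  have hden : ((e + 2 : ℕ) : K) * u.coeff (-((e + 2 : ℕ) : ℤ)) ≠ 0 :=
    mul_ne_zero hdK hu0
  have hcval : ((e : K) + 2) * t ^ (e + 1) * c
      = Lsum u (e + 2) j v - (v ^ (e + 2)).coeff m := by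
    rw [hc, newc]
    have hmm : ((j : ℤ) - (e + 2 : ℕ) + 1) = m := by rw [hm]
    have hcast : ((e : K) + 2) = ((e + 2 : ℕ) : K) := by push_cast; ring
    rw [hmm, hcast, ← hd1, ht, mul_comm]
    exact div_mul_cancel₀ _ hden
  rw [hLHS, hdec, hcval]
  ring

end Key

section Master

variable {u : LaurentSeries K} {d : ℕ} {t : K}

lemma sum_coeff_eq (hd2 : 2 ≤ d) (hu : lbd (-(d : ℤ)) u) (hu0 : u.coeff (-(d : ℤ)) ≠ 0)
    (ht : t ^ (d - 1) = u.coeff (-(d : ℤ))) (hdK : (d : K) ≠ 0)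
    (k : ℤ) (F : Finset ℤ) (hF : Finset.Icc (-1 : ℤ) (max 0 k) ⊆ F) :
    (∑ n ∈ F, (bphi u d t).coeff n • u ^ (-n)).coeff k = ((bphi u d t) ^ d).coeff k := by
  set φ := bphi u d t with hφ
  have hterm0 : ∀ n : ℤ, n < -1 ∨ max 0 k < n → (φ.coeff n • u ^ (-n)).coeff k = 0 := by
    intro n hn
    rcases hn with hn | hn
    · rw [hφ, bphi_coeff_neg u d t hn, zero_smul, HahnSeries.coeff_zero]
    · have hn0 : (0 : ℤ) ≤ n := le_trans (le_max_left 0 k) (le_of_lt hn)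
      have hlbd := u_zpow_lbd hu hu0 hn0
      have hk : k < (d : ℤ) * n := by
        have h1 : (1 : ℤ) * n ≤ (d : ℤ) * n := by
          apply mul_le_mul_of_nonneg_right _ hn0
          exact_mod_cast (by omega : 1 ≤ d)
        have h2 : k ≤ max 0 k := le_max_right 0 k
        omega
      rw [HahnSeries.coeff_smul, hlbd k hk, smul_zero]
  rw [coeff_sum, ← Finset.sum_subset hF (fun n _ hn => hterm0 n (by
    rw [Finset.mem_Icc] at hn; omega))]
  have hM1 : (0 : ℤ) ≤ max 0 k := le_max_left 0 k
  have hM2 : k ≤ max 0 k := le_max_right 0 k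
  rcases lt_trichotomy k (-(d : ℤ)) with hk | hk | hk
  · -- k < -d : everything vanishes
    have hrhs : (φ ^ d).coeff k = 0 := by
      refine (lbd_pow (bphi_lbd u d t) d) k ?_
      have : (d : ℤ) * (-1) = -(d : ℤ) := by ring
      omega
    rw [hrhs]
    refine Finset.sum_eq_zero ?_
    intro n hn
    rw [Finset.mem_Icc] at hn
    rcases eq_or_lt_of_le hn.1 with heq | hlt
    · rw [← heq, neg_neg, zpow_one, HahnSeries.coeff_smul, hu k hk, smul_zero]
    · have hn0 : (0 : ℤ) ≤ n := by omega
      have hlbd := u_zpow_lbd hu hu0 hn0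
      have hkn : k < (d : ℤ) * n := by
        have := mul_nonneg (by positivity : (0:ℤ) ≤ (d:ℤ)) hn0
        omega
      rw [HahnSeries.coeff_smul, hlbd k hkn, smul_zero]
  · -- k = -d : bottom coefficients
    subst hk
    have hmem : (-1 : ℤ) ∈ Finset.Icc (-1 : ℤ) (max 0 (-(d : ℤ))) :=
      Finset.mem_Icc.mpr ⟨le_rfl, by omega⟩
    rw [Finset.sum_eq_single_of_mem (-1 : ℤ) hmem ?other]
    case other =>
      intro n hn hne
      rw [Finset.mem_Icc] at hn
      have hn0 : (0 : ℤ) ≤ n := by omega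
      have hlbd := u_zpow_lbd hu hu0 hn0
      have hkn : -(d : ℤ) < (d : ℤ) * n := by
        have := mul_nonneg (by positivity : (0:ℤ) ≤ (d:ℤ)) hn0
        omega
      rw [HahnSeries.coeff_smul, hlbd _ hkn, smul_zero]
    rw [neg_neg, zpow_one, HahnSeries.coeff_smul, hφ, bphi_coeff_neg_one]
    have hidx : -(d : ℤ) = (d : ℤ) * (-1) := by ring
    rw [hidx, coeff_pow_bot (bphi_lbd u d t) d, bphi_coeff_neg_one]
    have hts : t ^ d = t ^ (d - 1) * t := by
      rw [← pow_succ]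
      congr 1
      omega
    rw [hts, ht, smul_eq_mul]
    ring
  · -- k > -d : the recursion
    set j : ℕ := (k + d - 1).toNat with hj
    have hjZ : (j : ℤ) = k + d - 1 := by rw [hj]; omega
    have hmj : max 0 k ≤ (j : ℤ) := max_le (by omega) (by omega)
    have hsub : Finset.Icc (-1 : ℤ) (max 0 k) ⊆ Finset.Icc (-1 : ℤ) (j : ℤ) :=
      Finset.Icc_subset_Icc le_rfl hmj
    rw [Finset.sum_subset hsub (fun n hn hnot => hterm0 n (by
      rw [Finset.mem_Icc] at hn hnot; omega))]
    have hkey := key hd2 hu hu0 ht hdK j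
    have hidx : ((j : ℤ) - d + 1) = k := by omega
    rw [hidx] at hkey
    rw [← hkey]
    refine Finset.sum_congr rfl ?_
    intro n _
    rw [HahnSeries.coeff_smul, smul_eq_mul]

lemma bphi_hasSum (hd2 : 2 ≤ d) (hu : lbd (-(d : ℤ)) u) (hu0 : u.coeff (-(d : ℤ)) ≠ 0)
    (ht : t ^ (d - 1) = u.coeff (-(d : ℤ))) (hdK : (d : K) ≠ 0) :
    HasSum (fun n : ℤ => (bphi u d t).coeff n • u ^ (-n)) ((bphi u d t) ^ d) := by
  rw [HasSum, SummationFilter.unconditional_filter, Filter.tendsto_atTop']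
  intro s hs
  obtain ⟨γ, hγ⟩ := Valued.mem_nhds.mp hs
  set m : ℤ := 1 - WithZero.log (MonoidWithZeroHom.ValueGroup₀.embedding γ.1) with hmdef
  refine ⟨Finset.Icc (-1 : ℤ) (max 0 m), fun F hF => hγ ?_⟩
  simp only [Set.mem_setOf_eq]
  rw [Valued.v.restrict_lt_iff_lt_embedding]
  have hle : Valued.v ((∑ n ∈ F, (bphi u d t).coeff n • u ^ (-n)) - (bphi u d t) ^ d)
      ≤ WithZero.exp (-m) := by
    rw [LaurentSeries.valuation_le_iff_coeff_lt_eq_zero]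
    intro k hk
    rw [HahnSeries.coeff_sub, sum_coeff_eq hd2 hu hu0 ht hdK k F
      (subset_trans (Finset.Icc_subset_Icc le_rfl (max_le_max le_rfl (le_of_lt hk))) hF),
      sub_self]
  refine lt_of_le_of_lt hle ?_
  rw [← WithZero.lt_log_iff_exp_lt (by simp), hmdef]
  omega

end Master

end BotAux

/-- Let `K` be a field of characteristic 0 and `f ∈ K[z]` of degree
`d ≥ 2` whose leading coefficient has a `(d−1)`-th root in `K`.  Then `f` admits a
Böttcher coordinate `φ(z) = a₁z + a₀ + ⋯ ∈ z·K[[1/z]]`, `a₁ ≠ 0`, `φ(f(z)) = φ(z)^d`. -/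
theorem stmt2 (K : Type*) [Field K] [CharZero K] (f : Polynomial K) (d : ℕ)
    (hd : 2 ≤ d) (hdeg : f.natDegree = d)
    (hroot : ∃ t : K, t ^ (d - 1) = f.leadingCoeff) :
    ∃ φ : LaurentSeries K, IsBottcher f d φ := by
  obtain ⟨t, ht⟩ := hroot
  have hf0 : f ≠ 0 := by
    intro h
    rw [h, natDegree_zero] at hdeg
    omega
  have hl0 : f.leadingCoeff ≠ 0 := leadingCoeff_ne_zero.mpr hf0
  set u := aeval (Zvar K) f with hu_def
  have hZ : ∀ i : ℕ, (Zvar K) ^ i = HahnSeries.single (-(i : ℤ)) 1 := by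
    intro i
    rw [Zvar, HahnSeries.single_pow, one_pow]
    congr 1
    simp
  have hcoeffu : ∀ k : ℤ, u.coeff k
      = ∑ i ∈ Finset.range (d + 1), f.coeff i * (if k = -(i : ℤ) then 1 else 0) := by
    intro k
    rw [hu_def, Polynomial.aeval_eq_sum_range, hdeg, BotAux.coeff_sum]
    refine Finset.sum_congr rfl ?_
    intro i _
    rw [hZ i, Algebra.smul_def]
    have halg : (algebraMap K (LaurentSeries K)) (f.coeff i) = HahnSeries.C (f.coeff i) := by
      rw [HahnSeries.algebraMap_apply', PowerSeries.algebraMap_apply, Algebra.algebraMap_self_apply,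
        HahnSeries.ofPowerSeries_C]
    rw [halg, HahnSeries.C_mul_eq_smul, HahnSeries.coeff_smul, smul_eq_mul,
      HahnSeries.coeff_single]
    split_ifs <;> simp
  have hu_lbd : BotAux.lbd (-(d : ℤ)) u := by
    intro k hk
    rw [hcoeffu]
    refine Finset.sum_eq_zero ?_
    intro i hi
    rw [Finset.mem_range] at hi
    rw [if_neg (by omega), mul_zero]
  have hu_top : u.coeff (-(d : ℤ)) = f.leadingCoeff := by
    rw [hcoeffu]
    rw [Finset.sum_eq_single_of_mem d (Finset.mem_range.mpr (by omega))]
    · rw [if_pos rfl, mul_one, Polynomial.leadingCoeff, hdeg]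
    · intro i hi hne
      rw [Finset.mem_range] at hi
      rw [if_neg (by omega), mul_zero]
  have hu0 : u.coeff (-(d : ℤ)) ≠ 0 := by rw [hu_top]; exact hl0
  have ht' : t ^ (d - 1) = u.coeff (-(d : ℤ)) := by rw [hu_top, ht]
  have hdK : (d : K) ≠ 0 := Nat.cast_ne_zero.mpr (by omega)
  have htne : t ≠ 0 := by
    intro h
    rw [h, zero_pow (by omega : d - 1 ≠ 0)] at ht
    exact hl0 ht.symm
  refine ⟨BotAux.bphi u d t, fun n hn => BotAux.bphi_coeff_neg u d t hn, ?_, ?_⟩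
  · rw [BotAux.bphi_coeff_neg_one]
    exact htne
  · exact (BotAux.bphi_hasSum hd hu_lbd hu0 ht' hdK).tsum_eq
end
end

section
/- Let K be a field of characteristic 0 and f ∈ K[z] of degree d ≥ 2. If φ and ψ are two Böttcher coordinates of f (formal Laurent series in z·K̄[[1/z]] with nonzero linear coefficient satisfying φ∘f = φ^d and ψ∘f = ψ^d), then ψ = ζ·φ for some (d−1)-th root of unity ζ. -/
open Polynomial

noncomputable section

namespace Stmt4Aux

open scoped Topology Multiplicative

variable {K : Type*} [Field K]

/-- `x` has order `e` with leading coefficient `c`. -/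
def OrdAt (x : LaurentSeries K) (e : ℤ) (c : K) : Prop :=
  c ≠ 0 ∧ x.coeff e = c ∧ ∀ k < e, x.coeff k = 0

namespace OrdAt

theorem ne_zero {x : LaurentSeries K} {e : ℤ} {c : K} (h : OrdAt x e c) : x ≠ 0 :=
  fun h0 => h.1 (by rw [← h.2.1, h0, HahnSeries.coeff_zero])

theorem order_eq {x : LaurentSeries K} {e : ℤ} {c : K} (h : OrdAt x e c) : x.order = e := by
  refine le_antisymm (HahnSeries.order_le_of_coeff_ne_zero (by rw [h.2.1]; exact h.1)) ?_
  by_contra hlt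
  push_neg at hlt
  exact (mt HahnSeries.coeff_order_eq_zero.mp h.ne_zero) (h.2.2 _ hlt)

theorem leadingCoeff_eq {x : LaurentSeries K} {e : ℤ} {c : K} (h : OrdAt x e c) :
    x.leadingCoeff = c := by
  rw [HahnSeries.leadingCoeff_eq, h.order_eq, h.2.1]

theorem coeff_eq_zero {x : LaurentSeries K} {e : ℤ} {c : K} (h : OrdAt x e c) {k : ℤ}
    (hk : k < e) : x.coeff k = 0 := h.2.2 k hk

theorem mul {x y : LaurentSeries K} {e e' : ℤ} {c c' : K} (hx : OrdAt x e c)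
    (hy : OrdAt y e' c') : OrdAt (x * y) (e + e') (c * c') := by
  refine ⟨mul_ne_zero hx.1 hy.1, ?_, fun k hk => ?_⟩
  · have h := HahnSeries.coeff_mul_order_add_order x y
    rw [hx.order_eq, hy.order_eq, hx.leadingCoeff_eq, hy.leadingCoeff_eq] at h
    exact h
  · apply HahnSeries.coeff_eq_zero_of_lt_order
    rw [HahnSeries.order_mul hx.ne_zero hy.ne_zero, hx.order_eq, hy.order_eq]
    exact hk

theorem one : OrdAt (1 : LaurentSeries K) 0 1 :=
  ⟨one_ne_zero, by simp, fun k hk => by rw [HahnSeries.coeff_one, if_neg hk.ne]⟩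

theorem pow {x : LaurentSeries K} {e : ℤ} {c : K} (hx : OrdAt x e c) (n : ℕ) :
    OrdAt (x ^ n) ((n : ℤ) * e) (c ^ n) := by
  induction n with
  | zero => simpa using one
  | succ n ih =>
      have h := ih.mul hx
      rw [← pow_succ, ← pow_succ] at h
      have : ((n : ℤ) * e + e) = ((n + 1 : ℕ) : ℤ) * e := by push_cast; ring
      rwa [this] at h

theorem unique {x : LaurentSeries K} {e e' : ℤ} {c c' : K} (h : OrdAt x e c)
    (h' : OrdAt x e' c') : e = e' ∧ c = c' := by
  have he : e = e' := by rw [← h.order_eq, h'.order_eq]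
  refine ⟨he, ?_⟩
  rw [← h.2.1, he, h'.2.1]

theorem inv {x : LaurentSeries K} {e : ℤ} {c : K} (hx : OrdAt x e c) :
    OrdAt x⁻¹ (-e) c⁻¹ := by
  have hx0 := hx.ne_zero
  have hi0 : x⁻¹ ≠ 0 := inv_ne_zero hx0
  have hOrd : OrdAt (x⁻¹) (x⁻¹.order) (x⁻¹.leadingCoeff) :=
    ⟨HahnSeries.leadingCoeff_ne_zero.mpr hi0, HahnSeries.leadingCoeff_eq.symm,
      fun k hk => HahnSeries.coeff_eq_zero_of_lt_order hk⟩
  have hmul := hx.mul hOrd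
  rw [mul_inv_cancel₀ hx0] at hmul
  obtain ⟨he, hc⟩ := one.unique hmul
  have he' : x⁻¹.order = -e := by omega
  rwa [he', ← inv_eq_of_mul_eq_one_right hc.symm] at hOrd

theorem zpow {x : LaurentSeries K} {e : ℤ} {c : K} (hx : OrdAt x e c) (n : ℤ) :
    OrdAt (x ^ n) (n * e) (c ^ n) := by
  cases n with
  | ofNat k =>
      rw [Int.ofNat_eq_coe, zpow_natCast, zpow_natCast]
      exact hx.pow k
  | negSucc k =>
      rw [zpow_negSucc, zpow_negSucc]
      have h := (hx.pow (k + 1)).inv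
      have : -(((k + 1 : ℕ) : ℤ) * e) = Int.negSucc k * e := by
        rw [Int.negSucc_eq]; push_cast; ring
      rwa [this] at h

theorem smul {x : LaurentSeries K} {e : ℤ} {c : K} (hx : OrdAt x e c) {ζ : K} (hζ : ζ ≠ 0) :
    OrdAt (ζ • x) e (ζ * c) := by
  refine ⟨mul_ne_zero hζ hx.1, ?_, fun k hk => ?_⟩
  · rw [HahnSeries.coeff_smul, smul_eq_mul, hx.2.1]
  · rw [HahnSeries.coeff_smul, smul_eq_mul, hx.coeff_eq_zero hk, mul_zero]

end OrdAt

theorem coeff_sum {ι : Type*} (s : Finset ι) (f : ι → LaurentSeries K) (k : ℤ) :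
    (∑ i ∈ s, f i).coeff k = ∑ i ∈ s, (f i).coeff k :=
  map_sum (HahnSeries.coeff.addMonoidHom k) f s

theorem coeff_hasSum {g : ℤ → LaurentSeries K} {a : LaurentSeries K} (h : HasSum g a)
    (k : ℤ) (S : Finset ℤ) (hS : ∀ n ∉ S, (g n).coeff k = 0) :
    a.coeff k = ∑ n ∈ S, (g n).coeff k := by
  have hV : {x : LaurentSeries K | ∀ n < k + 1, x.coeff n = 0} ∈ 𝓝 (0 : LaurentSeries K) := by
    rw [Valued.mem_nhds_zero]
    have hy0 : (HahnSeries.single (k + 1) (1 : K) : LaurentSeries K) ≠ 0 := by simp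
    refine ⟨Units.mk0 (Valued.v.restrict (HahnSeries.single (k + 1) (1 : K) : LaurentSeries K))
      ((Valuation.ne_zero_iff _).mpr hy0), fun x hx n hn => ?_⟩
    have hx' : Valued.v x < Valued.v (HahnSeries.single (k + 1) (1 : K) : LaurentSeries K) :=
      (Valuation.restrict_lt_iff (v := Valued.v)).mp hx
    refine (LaurentSeries.valuation_le_iff_coeff_lt_eq_zero K).mp (le_trans (le_of_lt hx') ?_) n hn
    apply (LaurentSeries.valuation_le_iff_coeff_lt_eq_zero K).mpr
    intro j hj
    rw [HahnSeries.coeff_single, if_neg (by omega)]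
  have h0 : Filter.Tendsto (fun s : Finset ℤ => (∑ n ∈ s, g n) - a) Filter.atTop
      (𝓝 (0 : LaurentSeries K)) := tendsto_sub_nhds_zero_iff.mpr h
  have hE : ∀ᶠ s : Finset ℤ in Filter.atTop,
      (∑ n ∈ s, g n) - a ∈ {x : LaurentSeries K | ∀ n < k + 1, x.coeff n = 0} :=
    Filter.eventually_mem_set.mpr (h0 hV)
  have hF : ∀ᶠ s : Finset ℤ in Filter.atTop, S ≤ s := Filter.eventually_ge_atTop S
  obtain ⟨s, h1, h2⟩ := (hE.and hF).exists
  have h3 : ((∑ n ∈ s, g n) - a).coeff k = 0 := h1 k (by omega)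
  rw [HahnSeries.coeff_sub, sub_eq_zero] at h3
  rw [← h3, Stmt4Aux.coeff_sum]
  exact (Finset.sum_subset h2 fun n _ hn => hS n hn).symm

theorem algebraMap_eq_C (c : K) :
    (algebraMap K (LaurentSeries K)) c = HahnSeries.C c := by
  rw [HahnSeries.algebraMap_apply', ← PowerSeries.C_eq_algebraMap, HahnSeries.ofPowerSeries_C]

theorem aeval_Zvar_coeff (f : K[X]) (k : ℤ) :
    (aeval (Zvar K) f).coeff k =
      ∑ i ∈ Finset.range (f.natDegree + 1), if k = -(i : ℤ) then f.coeff i else 0 := by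
  rw [Polynomial.aeval_eq_sum_range, Stmt4Aux.coeff_sum]
  refine Finset.sum_congr rfl fun i _ => ?_
  have hz : (Zvar K) ^ i = HahnSeries.single (-(i : ℤ)) (1 : K) := by
    rw [Zvar, HahnSeries.single_pow, one_pow, nsmul_eq_mul]
    norm_num
  rw [Algebra.smul_def, algebraMap_eq_C, HahnSeries.C_apply, hz,
    HahnSeries.single_mul_single, zero_add, mul_one, HahnSeries.coeff_single]
  split <;> rfl

theorem aeval_Zvar_coeff_lt {f : K[X]} {k : ℤ} (hk : k < -(f.natDegree : ℤ)) :
    (aeval (Zvar K) f).coeff k = 0 := by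
  rw [aeval_Zvar_coeff]
  refine Finset.sum_eq_zero fun i hi => ?_
  rw [Finset.mem_range] at hi
  have : k ≠ -(i : ℤ) := by
    have : (i : ℤ) ≤ (f.natDegree : ℤ) := by exact_mod_cast Nat.lt_succ_iff.mp hi
    omega
  rw [if_neg this]

theorem aeval_Zvar_coeff_deg (f : K[X]) :
    (aeval (Zvar K) f).coeff (-(f.natDegree : ℤ)) = f.leadingCoeff := by
  rw [aeval_Zvar_coeff]
  rw [Finset.sum_eq_single_of_mem f.natDegree (Finset.self_mem_range_succ _)]
  · rw [if_pos rfl]; rfl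
  · intro i _ hi
    have hne : -(f.natDegree : ℤ) ≠ -(i : ℤ) := by
      intro h
      exact hi (by exact_mod_cast (neg_injective h).symm)
    rw [if_neg hne]

theorem lcomp_coeff {χ u : LaurentSeries K} {dz : ℤ} {c : K} (hdz : 1 ≤ dz)
    (hu : OrdAt u (-dz) c) (hχ : ∀ n : ℤ, n < -1 → χ.coeff n = 0)
    (hs : Summable fun n : ℤ => χ.coeff n • u ^ (-n)) (k : ℤ) :
    (lcomp χ u).coeff k =
      ∑ n ∈ Finset.Icc (-1 : ℤ) (max 1 k), χ.coeff n * (u ^ (-n)).coeff k := by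
  have key := coeff_hasSum hs.hasSum k (Finset.Icc (-1 : ℤ) (max 1 k)) ?_
  · rw [lcomp, key]
    exact Finset.sum_congr rfl fun n _ => by rw [HahnSeries.coeff_smul, smul_eq_mul]
  · intro n hn
    rw [Finset.mem_Icc, not_and_or, not_le, not_le] at hn
    rcases hn with hn | hn
    · rw [hχ n hn, zero_smul]; exact HahnSeries.coeff_zero
    · have h1 : (1 : ℤ) < n := lt_of_le_of_lt (le_max_left _ _) hn
      have hk : k < n := lt_of_le_of_lt (le_max_right 1 k) hn
      have hord := hu.zpow (-n)
      have : (u ^ (-n)).coeff k = 0 := by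
        apply hord.coeff_eq_zero
        have hn0 : (0 : ℤ) ≤ n := by omega
        have : n ≤ n * dz := le_mul_of_one_le_right hn0 hdz
        have h2 : -n * -dz = n * dz := by ring
        rw [h2]
        omega
      rw [HahnSeries.coeff_smul, this, smul_zero]

end Stmt4Aux

open Stmt4Aux

/-- Let `K` be a field of characteristic 0 and `f ∈ K[z]` of degree
`d ≥ 2`.  If `φ` and `ψ` are two Böttcher coordinates of `f`, then `ψ = ζ·φ` for some
`(d−1)`-th root of unity `ζ`. -/
theorem stmt4 (K : Type*) [Field K] [CharZero K] (f : Polynomial K) (d : ℕ)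
    (hd : 2 ≤ d) (hdeg : f.natDegree = d)
    (φ ψ : LaurentSeries K) (hφ : IsBottcher f d φ) (hψ : IsBottcher f d ψ) :
    ∃ ζ : K, ζ ^ (d - 1) = 1 ∧ ψ = ζ • φ := by
  obtain ⟨hφ1, hφ2, hφ3⟩ := hφ
  obtain ⟨hψ1, hψ2, hψ3⟩ := hψ
  set F : LaurentSeries K := aeval (Zvar K) f with hF
  have hd1 : (1 : ℤ) ≤ (d : ℤ) := by exact_mod_cast Nat.one_le_of_lt hd
  have hd2 : (2 : ℤ) ≤ (d : ℤ) := by exact_mod_cast hd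
  have hf0 : f ≠ 0 := fun h => by rw [h, Polynomial.natDegree_zero] at hdeg; omega
  have hc0 : f.coeff d ≠ 0 := by
    have h := Polynomial.leadingCoeff_ne_zero.mpr hf0
    rwa [Polynomial.leadingCoeff, hdeg] at h
  have hFord : OrdAt F (-(d : ℤ)) (f.coeff d) := by
    refine ⟨hc0, ?_, fun k hk => ?_⟩
    · have h := aeval_Zvar_coeff_deg (K := K) f
      rw [hdeg] at h
      rw [hF, h, Polynomial.leadingCoeff, hdeg]
    · exact aeval_Zvar_coeff_lt (show k < -(f.natDegree : ℤ) by rw [hdeg]; exact hk)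
  -- summability of the two families, and the master coefficient formula
  have summ : ∀ χ : LaurentSeries K, χ.coeff (-1) ≠ 0 → lcomp χ F = χ ^ d →
      Summable fun n : ℤ => χ.coeff n • F ^ (-n) := by
    intro χ h2 h3
    by_contra hns
    have h0 : lcomp χ F = 0 := tsum_eq_zero_of_not_summable hns
    rw [h3] at h0
    have hχ0 : χ ≠ 0 := fun h => h2 (by rw [h, HahnSeries.coeff_zero])
    exact pow_ne_zero d hχ0 h0
  have Eφ : ∀ k : ℤ, (φ ^ d).coeff k =
      ∑ n ∈ Finset.Icc (-1 : ℤ) (max 1 k), φ.coeff n * (F ^ (-n)).coeff k := by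
    intro k
    rw [← hφ3]
    exact lcomp_coeff hd1 hFord hφ1 (summ φ hφ2 hφ3) k
  have Eψ : ∀ k : ℤ, (ψ ^ d).coeff k =
      ∑ n ∈ Finset.Icc (-1 : ℤ) (max 1 k), ψ.coeff n * (F ^ (-n)).coeff k := by
    intro k
    rw [← hψ3]
    exact lcomp_coeff hd1 hFord hψ1 (summ ψ hψ2 hψ3) k
  -- Step 1: leading coefficients
  have hIcc : Finset.Icc (-1 : ℤ) (max 1 (-(d : ℤ))) = {-1, 0, 1} := by
    have h : max 1 (-(d : ℤ)) = 1 := max_eq_left (by omega)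
    rw [h]
    ext x
    simp only [Finset.mem_Icc, Finset.mem_insert, Finset.mem_singleton]
    omega
  have step1 : ∀ χ : LaurentSeries K, (∀ n : ℤ, n < -1 → χ.coeff n = 0) →
      χ.coeff (-1) ≠ 0 →
      (∀ k : ℤ, (χ ^ d).coeff k =
        ∑ n ∈ Finset.Icc (-1 : ℤ) (max 1 k), χ.coeff n * (F ^ (-n)).coeff k) →
      χ.coeff (-1) ^ (d - 1) = f.coeff d := by
    intro χ h1 h2 E
    have hOrd : OrdAt χ (-1) (χ.coeff (-1)) := ⟨h2, rfl, fun k hk => h1 k hk⟩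
    have hpow : OrdAt (χ ^ d) (-(d : ℤ)) (χ.coeff (-1) ^ d) := by
      have h := hOrd.pow d
      rwa [mul_neg_one] at h
    have E' := E (-(d : ℤ))
    rw [hpow.2.1, hIcc] at E'
    have t0 : (F ^ (-(0 : ℤ))).coeff (-(d : ℤ)) = 0 := by
      rw [neg_zero, zpow_zero, HahnSeries.coeff_one, if_neg (by omega)]
    have t1 : (F ^ (-(1 : ℤ))).coeff (-(d : ℤ)) = 0 := by
      rw [zpow_neg_one]
      exact hFord.inv.coeff_eq_zero (by omega)
    have tm1 : (F ^ (-(-1 : ℤ))).coeff (-(d : ℤ)) = f.coeff d := by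
      rw [neg_neg, zpow_one, hFord.2.1]
    rw [Finset.sum_insert (by decide), Finset.sum_insert (by decide),
      Finset.sum_singleton, t0, t1, tm1, mul_zero, mul_zero, add_zero, add_zero] at E'
    -- E' : χ.coeff (-1) ^ d = χ.coeff (-1) * f.coeff d
    have hdd : d - 1 + 1 = d := by omega
    have : χ.coeff (-1) ^ (d - 1) * χ.coeff (-1) = f.coeff d * χ.coeff (-1) := by
      rw [← pow_succ, hdd, E', mul_comm]
    exact mul_right_cancel₀ h2 this
  have ha' : φ.coeff (-1) ^ (d - 1) = f.coeff d := step1 φ hφ1 hφ2 Eφ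
  have hb' : ψ.coeff (-1) ^ (d - 1) = f.coeff d := step1 ψ hψ1 hψ2 Eψ
  set a : K := φ.coeff (-1) with hadef
  set b : K := ψ.coeff (-1) with hbdef
  set ζ : K := b / a with hζdef
  have hζroot : ζ ^ (d - 1) = 1 := by
    rw [hζdef, div_pow, ha', hb', div_self hc0]
  refine ⟨ζ, hζroot, ?_⟩
  by_contra hne
  have hζa : ζ * a = b := div_mul_cancel₀ b hφ2
  have hζ0 : ζ ≠ 0 := div_ne_zero hψ2 hφ2
  set δ : LaurentSeries K := ψ - ζ • φ with hδdef
  have hδ0 : δ ≠ 0 := sub_ne_zero.mpr hne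
  have hδcoeff : ∀ n : ℤ, δ.coeff n = ψ.coeff n - ζ * φ.coeff n := fun n => by
    rw [hδdef, HahnSeries.coeff_sub, HahnSeries.coeff_smul, smul_eq_mul]
  have hδlow : ∀ n : ℤ, n < 0 → δ.coeff n = 0 := by
    intro n hn
    rcases (by omega : n < -1 ∨ n = -1) with h | h
    · rw [hδcoeff, hψ1 n h, hφ1 n h, mul_zero, sub_zero]
    · rw [h, hδcoeff, hζa]; exact sub_self b
  set m : ℤ := δ.order with hmdef
  have hm0 : (0 : ℤ) ≤ m := by
    by_contra h
    push_neg at h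
    exact (mt HahnSeries.coeff_order_eq_zero.mp hδ0) (hδlow m h)
  set dm : K := δ.coeff m with hdmdef
  have hOrdδ : OrdAt δ m dm := by
    refine ⟨?_, rfl, fun k hk => HahnSeries.coeff_eq_zero_of_lt_order hk⟩
    exact mt HahnSeries.coeff_order_eq_zero.mp hδ0
  set k : ℤ := m - (d : ℤ) + 1 with hkdef
  -- LHS vanishes
  have hLHS : (ψ ^ d).coeff k - ζ * (φ ^ d).coeff k = 0 := by
    rw [Eψ k, Eφ k, Finset.mul_sum, ← Finset.sum_sub_distrib]
    refine Finset.sum_eq_zero fun n hn => ?_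
    have : ψ.coeff n * (F ^ (-n)).coeff k - ζ * (φ.coeff n * (F ^ (-n)).coeff k)
        = δ.coeff n * (F ^ (-n)).coeff k := by
      rw [hδcoeff]; ring
    rw [this]
    by_cases hnm : n < m
    · rw [hOrdδ.coeff_eq_zero hnm, zero_mul]
    · push_neg at hnm
      have hn0 : (0 : ℤ) ≤ n := le_trans hm0 hnm
      have hnd : n ≤ n * (d : ℤ) := le_mul_of_one_le_right hn0 hd1
      have hzero : (F ^ (-n)).coeff k = 0 := by
        apply (hFord.zpow (-n)).coeff_eq_zero
        have h2 : -n * -(d : ℤ) = n * (d : ℤ) := by ring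
        rw [h2]
        omega
      rw [hzero, mul_zero]
  -- RHS : binomial expansion
  set ρ : LaurentSeries K := ζ • φ with hρdef
  have hOrdφ : OrdAt φ (-1) a := ⟨hφ2, rfl, fun n hn => hφ1 n hn⟩
  have hOrdρ : OrdAt ρ (-1) b := by
    have h := hOrdφ.smul hζ0
    rwa [hζa] at h
  have hζd : ζ ^ d = ζ := by
    have hdd : d - 1 + 1 = d := by omega
    calc ζ ^ d = ζ ^ (d - 1) * ζ := by rw [← pow_succ, hdd]
    _ = ζ := by rw [hζroot, one_mul]
  have hρd : (ρ ^ d).coeff k = ζ * (φ ^ d).coeff k := by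
    have hρpow : ρ ^ d = ζ ^ d • φ ^ d := by
      rw [hρdef, ← HahnSeries.C_mul_eq_smul, mul_pow, ← map_pow, HahnSeries.C_mul_eq_smul]
    rw [hρpow, hζd, HahnSeries.coeff_smul, smul_eq_mul]
  have hmain : ((ψ ^ d) - (ρ ^ d)).coeff k = 0 := by
    rw [HahnSeries.coeff_sub, hρd]
    exact hLHS
  have hψρ : ψ = ρ + δ := by rw [hρdef, hδdef]; ring
  have hexp : (ψ ^ d) - (ρ ^ d) =
      ∑ j ∈ Finset.range d, ρ ^ j * δ ^ (d - j) * ((d.choose j : ℕ) : LaurentSeries K) := by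
    rw [hψρ, add_pow, Finset.sum_range_succ, Nat.sub_self, pow_zero, mul_one,
      Nat.choose_self, Nat.cast_one, mul_one, add_sub_cancel_right]
  -- coefficient of a natCast multiple
  have hcast : ∀ (x : LaurentSeries K) (c : ℕ) (j : ℤ),
      (x * ((c : ℕ) : LaurentSeries K)).coeff j = (c : K) * x.coeff j := by
    intro x c j
    rw [mul_comm, ← map_natCast (HahnSeries.C : K →+* LaurentSeries K) c,
      HahnSeries.C_mul_eq_smul, HahnSeries.coeff_smul, smul_eq_mul]
  have hsum0 : (∑ j ∈ Finset.range d,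
      ρ ^ j * δ ^ (d - j) * ((d.choose j : ℕ) : LaurentSeries K)).coeff k =
      (d : K) * (b ^ (d - 1) * dm) := by
    rw [Stmt4Aux.coeff_sum]
    rw [Finset.sum_eq_single_of_mem (d - 1) (Finset.mem_range.mpr (by omega))]
    · show (ρ ^ (d - 1) * δ ^ (d - (d - 1)) * ((d.choose (d - 1) : ℕ) : LaurentSeries K)).coeff k
        = _
      have h1 : d - (d - 1) = 1 := by omega
      have hch : d.choose (d - 1) = d := by
        rw [← Nat.choose_symm (Nat.sub_le d 1), Nat.sub_sub_self (by omega : 1 ≤ d),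
          Nat.choose_one_right]
      rw [h1, pow_one, hch, hcast]
      have hOrdt : OrdAt (ρ ^ (d - 1) * δ) ((((d : ℕ) - 1 : ℕ) : ℤ) * (-1) + m)
          (b ^ (d - 1) * dm) := (hOrdρ.pow (d - 1)).mul hOrdδ
      have hcastd : (((d : ℕ) - 1 : ℕ) : ℤ) = (d : ℤ) - 1 := by
        rw [Nat.cast_sub (by omega : 1 ≤ d)]; norm_num
      have heq : (((d : ℕ) - 1 : ℕ) : ℤ) * (-1) + m = k := by rw [hcastd, hkdef]; ring
      rw [heq] at hOrdt
      rw [hOrdt.2.1]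
    · intro j hj hjne
      show (ρ ^ j * δ ^ (d - j) * ((d.choose j : ℕ) : LaurentSeries K)).coeff k = 0
      rw [Finset.mem_range] at hj
      have hjd : j ≤ d - 2 := by omega
      have hOrdt : OrdAt (ρ ^ j * δ ^ (d - j)) ((j : ℤ) * (-1) + (((d - j : ℕ) : ℤ) * m))
          (b ^ j * dm ^ (d - j)) := (hOrdρ.pow j).mul (hOrdδ.pow (d - j))
      have hcastj : (((d - j : ℕ) : ℤ)) = (d : ℤ) - (j : ℤ) := by
        rw [Nat.cast_sub (by omega : j ≤ d)]
      have hjz : (j : ℤ) ≤ (d : ℤ) - 2 := by exact_mod_cast hjd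
      have hzero : (ρ ^ j * δ ^ (d - j)).coeff k = 0 := by
        apply hOrdt.coeff_eq_zero
        rw [hcastj, hkdef]
        have hnn : (0 : ℤ) ≤ ((d : ℤ) - (j : ℤ) - 1) * m :=
          mul_nonneg (by omega) hm0
        nlinarith
      rw [hcast, hzero, mul_zero]
  have hne0 : (d : K) * (b ^ (d - 1) * dm) ≠ 0 := by
    refine mul_ne_zero ?_ (mul_ne_zero (pow_ne_zero _ hψ2) hOrdδ.1)
    exact_mod_cast Nat.cast_ne_zero.mpr (by omega)
  rw [hexp, hsum0] at hmain
  exact hne0 hmain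
end
end

section
/- Let φ: X → X be a morphism of a variety X over an algebraically closed field, let x ∈ X, and let N ∈ ℕ. Suppose Z is the Zariski closure of {φ^k(x) : k ≥ N} and Z' is an irreducible component of Z of maximal dimension. Then Z' is preperiodic under φ, i.e., there exist integers m > m' ≥ 0 with φ^m(Z') = φ^{m'}(Z'). -/
open Filter TopologicalSpace Set

section aux
variable {X : Type*} [TopologicalSpace X]

lemma aux_sub_of_irr_sub_sUnion {S : Set (Set X)} (hfin : S.Finite)
    (hcl : ∀ C ∈ S, IsClosed C) {W : Set X} (hW : IsIrreducible W) (hWs : W ⊆ ⋃₀ S) :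
    ∃ C ∈ S, W ⊆ C := by
  have h := (isIrreducible_iff_sUnion_isClosed.mp hW) hfin.toFinset
    (by intro z hz; exact hcl z (hfin.mem_toFinset.mp hz))
    (by rwa [hfin.coe_toFinset])
  obtain ⟨z, hz, hWz⟩ := h
  exact ⟨z, hfin.mem_toFinset.mp hz, hWz⟩

lemma aux_components [NoetherianSpace X] {F : Set X} (hF : IsClosed F) :
    ∃ S : Set (Set X), S.Finite ∧ (∀ C ∈ S, IsClosed C) ∧ (∀ C ∈ S, IsIrreducible C) ∧
      F = ⋃₀ S ∧ ∀ C ∈ S, ∀ C' ∈ S, C ⊆ C' → C = C' := by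
  obtain ⟨S0, hfin, hcl, hirr, hU⟩ := NoetherianSpace.exists_finite_set_isClosed_irreducible hF
  refine ⟨{C ∈ S0 | ∀ C' ∈ S0, C ⊆ C' → C = C'}, hfin.subset (sep_subset _ _),
    fun C hC => hcl C hC.1, fun C hC => hirr C hC.1, ?_,
    fun C hC C' hC' h => hC.2 C' hC'.1 h⟩
  apply subset_antisymm
  · intro y hy
    rw [hU] at hy
    obtain ⟨C, hC, hyC⟩ := hy
    obtain ⟨C', hC'm⟩ := (hfin.subset (sep_subset _ (fun D => C ⊆ D))).exists_maximal
      ⟨C, hC, subset_rfl⟩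
    have hC' := hC'm.1
    have hCC' : ∀ D ∈ {D ∈ S0 | C ⊆ D}, C' ⊆ D → C' = D := fun D hD hle => hC'm.eq_of_le hD hle
    refine ⟨C', ⟨hC'.1, fun D hD hle => hCC' D ⟨hD, hC'.2.trans hle⟩ hle⟩, hC'.2 hyC⟩
  · rw [hU]; exact sUnion_subset_sUnion (sep_subset _ _)

lemma aux_irr_finite_singleton [T1Space X] {s : Set X} (h : IsIrreducible s) (hf : s.Finite) :
    ∃ p, s = {p} := by
  obtain ⟨p, hp⟩ := h.nonempty
  refine ⟨p, subset_antisymm ?_ (by simpa using hp)⟩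
  have hcl : ∀ C ∈ ({{p}, s \ {p}} : Set (Set X)), IsClosed C := by
    rintro D (rfl | rfl)
    · exact isClosed_singleton
    · exact (hf.sdiff (t := {p})).isClosed
  have hsub : s ⊆ ⋃₀ ({{p}, s \ {p}} : Set (Set X)) := by
    intro y hy
    by_cases hyp : y = p
    · exact ⟨{p}, by simp, by simp [hyp]⟩
    · exact ⟨s \ {p}, by simp, ⟨hy, hyp⟩⟩
  obtain ⟨C, hC, hsC⟩ := aux_sub_of_irr_sub_sUnion (by simp) hcl h hsub
  rcases hC with rfl | rfl
  · exact hsC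
  · exact absurd (hsC hp) (fun h' => h'.2 rfl)

lemma aux_dim_le_zero {T : Type*} [TopologicalSpace T] [Subsingleton T] :
    topologicalKrullDim T ≤ 0 := by
  have : Subsingleton (IrreducibleCloseds T) := by
    constructor
    rintro ⟨s, hs1, hs2⟩ ⟨t, ht1, ht2⟩
    have hst : s = t := by
      obtain ⟨a, ha⟩ := hs1.nonempty
      obtain ⟨b, hb⟩ := ht1.nonempty
      ext y
      constructor <;> intro _
      · exact (Subsingleton.elim y b) ▸ hb
      · exact (Subsingleton.elim y a) ▸ ha
    subst hst; rfl
  exact Order.krullDim_nonpos_of_subsingleton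

lemma aux_one_le_dim {T : Type*} [TopologicalSpace T] [T1Space T] [IrreducibleSpace T]
    {a b : T} (hab : a ≠ b) : 1 ≤ topologicalKrullDim T := by
  let A : IrreducibleCloseds T := ⟨{a}, isIrreducible_singleton, isClosed_singleton⟩
  let B : IrreducibleCloseds T := ⟨Set.univ, IrreducibleSpace.isIrreducible_univ T, isClosed_univ⟩
  have hAB : A < B := by
    refine lt_of_le_of_ne (fun y _ => trivial) ?_
    intro h
    have : b ∈ (A : Set T) := by rw [h]; trivial
    exact hab ((eq_of_mem_singleton this).symm)
  have h := Order.LTSeries.length_le_krullDim ((RelSeries.singleton _ A).snoc B (by simpa using hAB))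
  simpa [topologicalKrullDim] using h

lemma aux_closure_image_closure {Y : Type*} [TopologicalSpace Y] {f : X → Y}
    (hf : Continuous f) (B : Set X) : closure (f '' closure B) = closure (f '' B) :=
  subset_antisymm (closure_minimal (image_closure_subset_closure_image hf) isClosed_closure)
    (closure_mono (image_mono subset_closure))

end aux
/-- Let `φ : X → X` be a morphism of a variety (here: a continuous self-map
of a Noetherian T1 topological space, as is the Zariski topology on a variety over an
algebraically closed field), `x ∈ X` and `N ∈ ℕ`.  Let `Z` be the Zariski closure of
`{φ^k(x) : k ≥ N}` and let `Z'` be an irreducible component of `Z` of maximal dimension.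
Then `Z'` is preperiodic under `φ`: there are `m > m' ≥ 0` with `φ^m(Z') = φ^{m'}(Z')`
(images taken up to Zariski closure). -/
theorem stmt9 (X : Type*) [TopologicalSpace X] [TopologicalSpace.NoetherianSpace X]
    [T1Space X]
    (φ : X → X) (hφ : Continuous φ) (x : X) (N : ℕ)
    (Z : Set X) (hZ : Z = closure {y : X | ∃ k : ℕ, N ≤ k ∧ φ^[k] x = y})
    (Z' : Set X) (hirr : IsIrreducible Z') (hsub : Z' ⊆ Z)
    (hmax : ∀ W : Set X, IsIrreducible W → W ⊆ Z → Z' ⊆ W → W = Z')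
    (hdim : ∀ W : Set X, IsIrreducible W → W ⊆ Z →
      (∀ W' : Set X, IsIrreducible W' → W' ⊆ Z → W ⊆ W' → W' = W) →
      topologicalKrullDim W ≤ topologicalKrullDim Z') :
    ∃ m m' : ℕ, m' < m ∧ closure (φ^[m] '' Z') = closure (φ^[m'] '' Z') := by
  classical
  set A : Set X := {y : X | ∃ k : ℕ, N ≤ k ∧ φ^[k] x = y} with hA
  have hZc : IsClosed Z := hZ ▸ isClosed_closure
  have hAZ : A ⊆ Z := hZ ▸ subset_closure
  have hZ'c : IsClosed Z' := by
    have h1 : closure Z' = Z' :=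
      hmax (closure Z') hirr.closure (hZc.closure_subset_iff.mpr hsub) subset_closure
    rw [← h1]; exact isClosed_closure
  -- components of Z
  obtain ⟨S, hSfin, hScl, hSirr, hSU, hSmax⟩ := aux_components hZc
  have hSsubZ : ∀ C ∈ S, C ⊆ Z := by
    intro C hC; rw [hSU]; exact subset_sUnion_of_mem hC
  -- density of the orbit in Z'
  have hdense : Z' = closure (A ∩ Z') := by
    have h1 : Z ⊆ ⋃₀ ((fun C => closure (A ∩ C)) '' S) := by
      rw [hZ]
      apply closure_minimal
      · intro y hy
        have hyS : y ∈ ⋃₀ S := by rw [← hSU]; exact hAZ hy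
        obtain ⟨C, hC, hyC⟩ := hyS
        exact ⟨closure (A ∩ C), ⟨C, hC, rfl⟩, subset_closure ⟨hy, hyC⟩⟩
      · rw [sUnion_eq_biUnion]
        exact (hSfin.image _).isClosed_biUnion (by rintro D ⟨C, hC, rfl⟩; exact isClosed_closure)
    obtain ⟨D, hD, hZ'D⟩ := aux_sub_of_irr_sub_sUnion (hSfin.image _)
      (by rintro D ⟨C, hC, rfl⟩; exact isClosed_closure) hirr (hsub.trans h1)
    obtain ⟨C, hC, rfl⟩ := hD
    have hCZ : C = Z' := hmax C (hSirr C hC) (hSsubZ C hC)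
      (hZ'D.trans ((hScl C hC).closure_subset_iff.mpr inter_subset_right))
    refine subset_antisymm (hCZ ▸ hZ'D) (hZ'c.closure_subset_iff.mpr inter_subset_right)
  by_cases hsing : ∃ p, Z' = {p}
  · -- Case I : Z' is a single point
    obtain ⟨p, rfl⟩ := hsing
    have hne : (A ∩ {p}).Nonempty := by
      by_contra h
      rw [not_nonempty_iff_eq_empty] at h
      rw [h, closure_empty] at hdense
      exact (singleton_nonempty p).ne_empty hdense
    obtain ⟨q, hqA, hqp⟩ := hne
    obtain ⟨k0, hk0, hk0x⟩ := hqA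
    have hpk : φ^[k0] x = p := by rw [hk0x]; exact hqp
    -- Z is finite
    have hZfin : Z.Finite := by
      have hsingle : ∀ C ∈ S, ∃ c, C = {c} := by
        intro C hC
        by_contra hcon
        obtain ⟨q1, hq1⟩ := (hSirr C hC).nonempty
        have h2 : ∃ q2 ∈ C, q2 ≠ q1 := by
          by_contra h2; push_neg at h2
          exact hcon ⟨q1, subset_antisymm (fun y hy => h2 y hy) (by simpa using hq1)⟩
        obtain ⟨q2, hq2, hq21⟩ := h2
        haveI := Subtype.irreducibleSpace (hSirr C hC)
        have hd1 : (1 : WithBot ℕ∞) ≤ topologicalKrullDim C :=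
          aux_one_le_dim (a := (⟨q1, hq1⟩ : C)) (b := (⟨q2, hq2⟩ : C))
            (by simp [Subtype.ext_iff]; exact fun h => hq21 h.symm)
        have hd2 : topologicalKrullDim C ≤ topologicalKrullDim ({p} : Set X) := by
          refine hdim C (hSirr C hC) (hSsubZ C hC) ?_
          intro W' hW' hW'Z hCW'
          obtain ⟨C', hC', hWC'⟩ := aux_sub_of_irr_sub_sUnion hSfin hScl hW' (hSU ▸ hW'Z)
          have := hSmax C hC C' hC' (hCW'.trans hWC')
          exact subset_antisymm (this ▸ hWC') hCW'
        have hd3 : topologicalKrullDim ({p} : Set X) ≤ 0 := aux_dim_le_zero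
        have hcontr : (1 : WithBot ℕ∞) ≤ 0 := hd1.trans (hd2.trans hd3)
        exact absurd hcontr (by decide)
      rw [hSU]
      refine Finite.sUnion hSfin ?_
      rintro C hC
      obtain ⟨c, rfl⟩ := hsingle C hC
      exact finite_singleton c
    -- pigeonhole on the orbit
    have hrep : ∃ k1 k2 : ℕ, k1 < k2 ∧ φ^[k1] x = φ^[k2] x := by
      have hmapZ : ∀ k : ℕ, φ^[N + k] x ∈ Z := fun k => hAZ ⟨N + k, Nat.le_add_right N k, rfl⟩
      haveI : Finite ↥Z := hZfin.to_subtype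
      obtain ⟨a, b, hab, heq⟩ :=
        Finite.exists_ne_map_eq_of_infinite (fun k : ℕ => (⟨φ^[N + k] x, hmapZ k⟩ : ↥Z))
      have heq' : φ^[N + a] x = φ^[N + b] x := congrArg Subtype.val heq
      rcases lt_or_gt_of_ne hab with h | h
      · exact ⟨N + a, N + b, by omega, heq'⟩
      · exact ⟨N + b, N + a, by omega, heq'.symm⟩
    obtain ⟨k1, k2, hlt, heq⟩ := hrep
    refine ⟨k2, k1, hlt, ?_⟩
    have key : φ^[k2] p = φ^[k1] p := by
      rw [← hpk, ← Function.iterate_add_apply, ← Function.iterate_add_apply,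
        Nat.add_comm k2 k0, Nat.add_comm k1 k0,
        Function.iterate_add_apply, Function.iterate_add_apply, heq]
    rw [image_singleton, image_singleton, key]
  · -- Case II : Z' is not a single point
    push_neg at hsing
    set T : ℕ → Set X := fun m => {y | ∃ k, m ≤ k ∧ φ^[k] x = y} with hT
    set c : ℕ → Closeds X := fun m => ⟨closure (T (N + m)), isClosed_closure⟩ with hc
    have hcanti : ∀ m n : ℕ, m ≤ n → (c n : Set X) ⊆ (c m : Set X) := by
      intro m n hmn
      apply closure_mono
      rintro y ⟨k, hk, rfl⟩
      exact ⟨k, by omega, rfl⟩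
    obtain ⟨cM, ⟨M, rfl⟩, hMmin⟩ :=
      (wellFounded_lt (α := Closeds X)).has_min
        (Set.range c) (Set.range_nonempty c)
    have hstab : ∀ m, M ≤ m → (c m : Set X) = (c M : Set X) := by
      intro m hm
      have h1 : (c m : Set X) ⊆ (c M : Set X) := hcanti M m hm
      by_contra hne
      refine hMmin (c m) ⟨m, rfl⟩ ?_
      exact lt_of_le_of_ne (SetLike.coe_subset_coe.mp h1) (fun h => hne (congrArg (fun s : Closeds X => (s : Set X)) h))
    set F : Set X := closure (T (N + M)) with hF
    have hFc : IsClosed F := isClosed_closure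
    have hFZ : F ⊆ Z := by
      rw [hZ]
      apply closure_mono
      rintro y ⟨k, hk, rfl⟩
      exact ⟨k, by omega, rfl⟩
    have hφF : closure (φ '' F) = F := by
      have h1 : closure (φ '' F) = closure (φ '' T (N + M)) :=
        aux_closure_image_closure hφ _
      have h2 : φ '' T (N + M) = T (N + M + 1) := by
        ext y
        constructor
        · rintro ⟨z, ⟨k, hk, rfl⟩, rfl⟩
          exact ⟨k + 1, by omega, by rw [Function.iterate_succ_apply']⟩
        · rintro ⟨k, hk, rfl⟩
          refine ⟨φ^[k - 1] x, ⟨k - 1, by omega, rfl⟩, ?_⟩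
          have hk1 : k - 1 + 1 = k := by omega
          calc φ (φ^[k - 1] x) = φ^[k - 1 + 1] x := (Function.iterate_succ_apply' φ (k - 1) x).symm
            _ = φ^[k] x := by rw [hk1]
      have h3 := hstab (M + 1) (by omega)
      rw [h1, h2]
      have h4 : (c (M + 1) : Set X) = closure (T (N + M + 1)) := rfl
      rw [← h4, h3]
      rfl
    -- Z' ⊆ F
    have hZ'F : Z' ⊆ F := by
      set Q : Set X := (fun k => φ^[k] x) '' (Set.Ico N (N + M)) with hQ
      have hQfin : Q.Finite := (Set.finite_Ico _ _).image _
      have h1 : Z' ⊆ Q ∪ F := by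
        rw [hdense]
        have hsplit : A ∩ Z' ⊆ Q ∪ T (N + M) := by
          rintro y ⟨⟨k, hk, rfl⟩, _⟩
          by_cases h : k < N + M
          · exact Or.inl ⟨k, ⟨hk, h⟩, rfl⟩
          · exact Or.inr ⟨k, by omega, rfl⟩
        calc closure (A ∩ Z') ⊆ closure (Q ∪ T (N + M)) := closure_mono hsplit
          _ ⊆ Q ∪ F := by
              rw [closure_union, hQfin.isClosed.closure_eq]
      obtain ⟨D, hD, hZ'D⟩ := aux_sub_of_irr_sub_sUnion (S := {Q, F}) (by simp)
        (by rintro D (rfl | rfl); exacts [hQfin.isClosed, hFc]) hirr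
        (by rwa [sUnion_pair])
      rcases hD with rfl | rfl
      · obtain ⟨p, hp⟩ := aux_irr_finite_singleton hirr (hQfin.subset hZ'D)
        exact absurd hp (hsing p)
      · exact hZ'D
    -- components of F
    obtain ⟨Sc, hScfin, hSccl, hScirr, hScU, hScmax⟩ := aux_components hFc
    have hScsubF : ∀ C ∈ Sc, C ⊆ F := by
      intro C hC; rw [hScU]; exact subset_sUnion_of_mem hC
    have hcontain : ∀ W : Set X, IsIrreducible W → W ⊆ F → ∃ C ∈ Sc, W ⊆ C := fun W hW hWF =>
      aux_sub_of_irr_sub_sUnion hScfin hSccl hW (hScU ▸ hWF)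
    have hcompmax : ∀ C ∈ Sc, ∀ W : Set X, IsIrreducible W → C ⊆ W → W ⊆ F → W = C := by
      intro C hC W hW hCW hWF
      obtain ⟨C', hC', hWC'⟩ := hcontain W hW hWF
      have := hScmax C hC C' hC' (hCW.trans hWC')
      exact subset_antisymm (this ▸ hWC') hCW
    have hZ'Sc : Z' ∈ Sc := by
      obtain ⟨C, hC, hZ'C⟩ := hcontain Z' hirr hZ'F
      have : C = Z' := hmax C (hScirr C hC) ((hScsubF C hC).trans hFZ) hZ'C
      rwa [← this]
    -- image data
    have hDirr : ∀ C ∈ Sc, IsIrreducible (closure (φ '' C)) := fun C hC =>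
      ((hScirr C hC).image φ hφ.continuousOn).closure
    have hDF : ∀ C ∈ Sc, closure (φ '' C) ⊆ F := by
      intro C hC
      rw [← hφF]
      exact closure_mono (image_mono (hScsubF C hC))
    -- surjectivity with equality
    have hS1 : ∀ C' ∈ Sc, ∃ C ∈ Sc, closure (φ '' C) = C' := by
      intro C' hC'
      have hFU : F ⊆ ⋃₀ ((fun C => closure (φ '' C)) '' Sc) := by
        rw [← hφF]
        apply closure_minimal
        · intro y hy
          obtain ⟨z, hz, rfl⟩ := hy
          have hzS : z ∈ ⋃₀ Sc := by rw [← hScU]; exact hz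
          obtain ⟨C, hC, hzC⟩ := hzS
          exact ⟨closure (φ '' C), ⟨C, hC, rfl⟩, subset_closure ⟨z, hzC, rfl⟩⟩
        · rw [sUnion_eq_biUnion]
          exact (hScfin.image _).isClosed_biUnion
            (by rintro D ⟨C, hC, rfl⟩; exact isClosed_closure)
      obtain ⟨D, hD, hC'D⟩ := aux_sub_of_irr_sub_sUnion (hScfin.image _)
        (by rintro D ⟨C, hC, rfl⟩; exact isClosed_closure) (hScirr C' hC')
        ((hScsubF C' hC').trans hFU)
      obtain ⟨C1, hC1, rfl⟩ := hD
      exact ⟨C1, hC1, hcompmax C' hC' _ (hDirr C1 hC1) hC'D (hDF C1 hC1)⟩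
    -- the induced map on components
    haveI : Finite ↥Sc := hScfin.to_subtype
    have hgex : ∀ C : ↥Sc, ∃ C' : ↥Sc, closure (φ '' (C : Set X)) ⊆ (C' : Set X) := by
      intro C
      obtain ⟨C', hC', hsub'⟩ := hcontain _ (hDirr C C.2) (hDF C C.2)
      exact ⟨⟨C', hC'⟩, hsub'⟩
    choose f hf using hgex
    have hfeq : ∀ C : ↥Sc, closure (φ '' (C : Set X)) ∈ Sc →
        (f C : Set X) = closure (φ '' (C : Set X)) := by
      intro C hmem
      exact (hScmax _ hmem _ (f C).2 (hf C)).symm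
    have hfsurj : Function.Surjective f := by
      intro C'
      obtain ⟨C1, hC1, hD1⟩ := hS1 C' C'.2
      refine ⟨⟨C1, hC1⟩, ?_⟩
      apply Subtype.ext
      rw [hfeq ⟨C1, hC1⟩ (by rw [hD1]; exact C'.2), hD1]
    have hfinj : Function.Injective f := Finite.injective_iff_surjective.mpr hfsurj
    have himg : ∀ C : ↥Sc, closure (φ '' (C : Set X)) = (f C : Set X) := by
      intro C
      obtain ⟨C1, hC1, hD1⟩ := hS1 (f C) (f C).2
      have h1 : f ⟨C1, hC1⟩ = f C := by
        apply Subtype.ext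
        rw [hfeq ⟨C1, hC1⟩ (by rw [hD1]; exact (f C).2), hD1]
      have h2 : (⟨C1, hC1⟩ : ↥Sc) = C := hfinj h1
      have h3 : (C : Set X) = C1 := by rw [← h2]
      rw [← hD1, h3]
    -- iterate
    have hWm : ∀ m : ℕ, closure (φ^[m] '' Z') = ((f^[m] ⟨Z', hZ'Sc⟩ : ↥Sc) : Set X) := by
      intro m
      induction m with
      | zero => simpa using hZ'c.closure_eq
      | succ m ih =>
        calc closure (φ^[m + 1] '' Z')
            = closure (φ '' (φ^[m] '' Z')) := by
              rw [Function.iterate_succ', Set.image_comp]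
          _ = closure (φ '' closure (φ^[m] '' Z')) := (aux_closure_image_closure hφ _).symm
          _ = closure (φ '' ((f^[m] ⟨Z', hZ'Sc⟩ : ↥Sc) : Set X)) := by rw [ih]
          _ = ((f (f^[m] ⟨Z', hZ'Sc⟩) : ↥Sc) : Set X) := himg _
          _ = ((f^[m + 1] ⟨Z', hZ'Sc⟩ : ↥Sc) : Set X) := by
              rw [Function.iterate_succ_apply']
    have hpigeon : ∃ a b : ℕ, a < b ∧ f^[a] ⟨Z', hZ'Sc⟩ = f^[b] ⟨Z', hZ'Sc⟩ := by
      obtain ⟨a, b, hab, heq⟩ :=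
        Finite.exists_ne_map_eq_of_infinite (fun k : ℕ => f^[k] (⟨Z', hZ'Sc⟩ : ↥Sc))
      rcases lt_or_gt_of_ne hab with h | h
      · exact ⟨a, b, h, heq⟩
      · exact ⟨b, a, h, heq.symm⟩
    obtain ⟨a, b, hab, heq⟩ := hpigeon
    refine ⟨b, a, hab, ?_⟩
    rw [hWm a, hWm b, heq]
end
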